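/- Let {P_θ : θ ∈ 𝕋} be a family of probability measures on a measurable space 𝕏 and η : 𝕏 × 𝕋 → [0,1] with x ↦ η(x,θ) measurable for each θ. Define π_x(θ) = P_θ({x' : η(x',θ) ≤ η(x,θ)}) and the possibility measure Π̄_x(A) = sup_{θ ∈ A} π_x(θ) for A ⊆ 𝕋. Then for every θ ∈ 𝕋 and α ∈ [0,1], P_θ({x : there exists A ⊆ 𝕋 with θ ∈ A and Π̄_x(A) ≤ α}) ≤ α. -/

import Mathlib

open MeasureTheory
open scoped ENNReal

/-- Superuniformity of the "p-value" `x ↦ μ {x' | f x' ≤ f x}` for a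
bounded score `f`. -/
theorem superuniform_aux {X : Type*} [MeasurableSpace X] (μ : Measure X)
    (f : X → ℝ) (hb : ∀ x, f x ≤ 1) (α : ℝ≥0∞) :
    μ {x | μ {x' | f x' ≤ f x} ≤ α} ≤ α := by
  set F : ℝ → ℝ≥0∞ := fun t => μ {x' | f x' ≤ t} with hF
  have hFmono : Monotone F := fun s t hst => measure_mono (fun x hx => le_trans hx hst)
  set S : Set X := {x | F (f x) ≤ α} with hS
  rcases Set.eq_empty_or_nonempty S with h | ⟨x0, hx0⟩
  · simp [show {x | μ {x' | f x' ≤ f x} ≤ α} = S from rfl, h]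
  · set V : Set ℝ := f '' S with hV
    have hVne : V.Nonempty := ⟨f x0, x0, hx0, rfl⟩
    have hVbdd : BddAbove V := ⟨1, by rintro v ⟨x, _, rfl⟩; exact hb x⟩
    set c : ℝ := sSup V with hc
    by_cases hatt : ∃ x ∈ S, f x = c
    · obtain ⟨x, hxS, hxc⟩ := hatt
      have hsub : S ⊆ {y | f y ≤ f x} := by
        intro y hy
        have : f y ≤ c := le_csSup hVbdd ⟨y, hy, rfl⟩
        simpa [hxc] using this
      exact (measure_mono hsub).trans hxS
    · have hlt : ∀ x ∈ S, f x < c := by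
        intro x hx
        exact lt_of_le_of_ne (le_csSup hVbdd ⟨x, hx, rfl⟩) (fun h => hatt ⟨x, hx, h⟩)
      have hsub : S ⊆ ⋃ n : ℕ, {y | f y ≤ c - 1 / (n + 1)} := by
        intro x hx
        obtain ⟨n, hn⟩ := exists_nat_one_div_lt (sub_pos.mpr (hlt x hx))
        refine Set.mem_iUnion.mpr ⟨n, ?_⟩
        show f x ≤ c - 1 / (n + 1 : ℝ)
        linarith
      refine (measure_mono hsub).trans ?_
      have hmono : Monotone fun n : ℕ => {y | f y ≤ c - 1 / (n + 1 : ℝ)} := by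
        intro m n hmn y hy
        simp only [Set.mem_setOf_eq] at hy ⊢
        have h0 : ((m : ℝ) + 1) ≤ (n : ℝ) + 1 := by exact_mod_cast Nat.succ_le_succ hmn
        have h1 : (1 : ℝ) / (n + 1) ≤ 1 / (m + 1) := by
          apply one_div_le_one_div_of_le
          · positivity
          · exact h0
        linarith
      rw [hmono.directed_le.measure_iUnion]
      refine iSup_le fun n => ?_
      have hc' : c - 1 / (n + 1 : ℝ) < c := by
        have : (0:ℝ) < 1 / (n + 1) := by positivity
        linarith
      obtain ⟨v, ⟨x, hxS, rfl⟩, hv⟩ := exists_lt_of_lt_csSup hVne hc'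
      exact le_trans (hFmono hv.le) hxS

/-- Uniform-over-true-hypotheses validity: the `P_θ`-probability that the
possibility measure `Π̄_x(A) = sup_{ϑ∈A} π_x(ϑ)` assigns value `≤ α` to some
hypothesis `A` containing the true `θ` is at most `α`. -/
theorem im_validity_uniform {X T : Type*} [MeasurableSpace X]
    (P : T → Measure X) (hP : ∀ θ, IsProbabilityMeasure (P θ))
    (η : X → T → ℝ) (hη : ∀ x θ, η x θ ∈ Set.Icc (0 : ℝ) 1)
    (hmeas : ∀ θ, Measurable fun x => η x θ) :
    ∀ θ : T, ∀ α : ℝ≥0∞, α ≤ 1 →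
      P θ {x | ∃ A : Set T, θ ∈ A ∧
        (⨆ ϑ ∈ A, P ϑ {x' | η x' ϑ ≤ η x ϑ}) ≤ α} ≤ α := by
  intro θ α _
  have hset : {x | ∃ A : Set T, θ ∈ A ∧
      (⨆ ϑ ∈ A, P ϑ {x' | η x' ϑ ≤ η x ϑ}) ≤ α}
      = {x | P θ {x' | η x' θ ≤ η x θ} ≤ α} := by
    ext x
    constructor
    · rintro ⟨A, hθA, hle⟩
      exact le_trans (le_iSup₂ (f := fun ϑ _ => P ϑ {x' | η x' ϑ ≤ η x ϑ}) θ hθA) hle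
    · intro hle
      exact ⟨{θ}, rfl, by simpa using hle⟩
  rw [hset]
  exact superuniform_aux (P θ) (fun x => η x θ) (fun x => (hη x θ).2) α
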